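/- For a connected graph G with at least 2 vertices and m edges, rc(G) = m if and only if G is a tree. -/

import Mathlib

open SimpleGraph

/-- A graph `G` is rainbow connected under edge-coloring `c` if any two vertices are
joined by a path whose edges receive pairwise distinct colors. -/
def RainbowConnected {V : Type*} (G : SimpleGraph V) (c : Sym2 V → ℕ) : Prop :=
  ∀ u v : V, ∃ p : G.Walk u v, p.IsPath ∧ (p.edges.map c).Nodup

/-- The rainbow connection number: the least number of colors in an edge-coloring
making `G` rainbow connected. -/
noncomputable def rc {V : Type*} [Fintype V] (G : SimpleGraph V) : ℕ :=
  sInf {n | ∃ c : Sym2 V → ℕ, (∀ e ∈ G.edgeSet, c e < n) ∧ RainbowConnected G c}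

/-- Least `n` with `n ^ s ≥ t`, i.e. `⌈t^(1/s)⌉`. -/
noncomputable def ceilRoot (s t : ℕ) : ℕ := sInf {n | t ≤ n ^ s}

section Aux

variable {V : Type*} [DecidableEq V]

/-- A coloring injective on the edge set rainbow-connects a connected graph. -/
private lemma rainbow_of_injOn {G : SimpleGraph V} (hG : G.Connected)
    {c : Sym2 V → ℕ} (hinj : ∀ e ∈ G.edgeSet, ∀ f ∈ G.edgeSet, c e = c f → e = f) :
    RainbowConnected G c := by
  intro u v
  obtain ⟨w⟩ := hG.preconnected u v
  refine ⟨(w.toPath : G.Walk u v), w.toPath.2, ?_⟩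
  refine List.Nodup.map_on ?_ w.toPath.2.isTrail.edges_nodup
  intro e he f hf h
  exact hinj e (Walk.edges_subset_edgeSet _ he) f (Walk.edges_subset_edgeSet _ hf) h

/-- In an acyclic connected graph, after deleting edge `s(a,b)`, every vertex can still
reach `a` or `b`. -/
private lemma reach_side {G : SimpleGraph V} (hT : G.IsAcyclic) (hc : G.Connected)
    {a b : V} (hab : G.Adj a b) (v : V) :
    (G.deleteEdges {s(a, b)}).Reachable v a ∨ (G.deleteEdges {s(a, b)}).Reachable v b := by
  obtain ⟨w⟩ := hc.preconnected v a
  set p : G.Walk v a := (w.toPath : G.Walk v a) with hpdef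
  have hp : p.IsPath := w.toPath.2
  by_cases he : s(a, b) ∈ p.edges
  · -- b is on the path; the part up to b avoids the edge
    have hb : b ∈ p.support := p.snd_mem_support_of_mem_edges he
    have hspec := p.take_spec hb
    have hdrop : (p.dropUntil b hb) = Walk.cons hab.symm Walk.nil := by
      have := hT.path_unique ⟨p.dropUntil b hb, hp.dropUntil hb⟩ (Path.singleton hab.symm)
      simpa [Path.singleton] using congrArg Subtype.val this
    have hedges : p.edges = (p.takeUntil b hb).edges ++ (p.dropUntil b hb).edges := by
      rw [← Walk.edges_append, hspec]
    have hnd : p.edges.Nodup := hp.isTrail.edges_nodup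
    rw [hedges] at hnd
    have hmem : s(a, b) ∈ (p.dropUntil b hb).edges := by
      rw [hdrop]
      simp [Sym2.eq_swap]
    have hnot : s(a, b) ∉ (p.takeUntil b hb).edges := by
      intro h
      exact (List.disjoint_of_nodup_append hnd) h hmem
    refine Or.inr ⟨(p.takeUntil b hb).toDeleteEdges {s(a, b)} ?_⟩
    intro e' he'
    simp only [Set.mem_singleton_iff]
    rintro rfl
    exact hnot he'
  · refine Or.inl ⟨p.toDeleteEdges {s(a, b)} ?_⟩
    intro e' he'
    simp only [Set.mem_singleton_iff]
    rintro rfl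
    exact he he'

private lemma bridge_not_reach {G : SimpleGraph V} (hT : G.IsAcyclic)
    {a b : V} (hab : G.Adj a b) : ¬ (G.deleteEdges {s(a, b)}).Reachable a b :=
  (isBridge_iff.mp (isAcyclic_iff_forall_adj_isBridge.mp hT hab))

private lemma adj_delete_of_ne {G : SimpleGraph V} {a b x y : V}
    (hxy : G.Adj x y) (hne : s(x, y) ≠ s(a, b)) : (G.deleteEdges {s(a, b)}).Adj x y := by
  rw [deleteEdges_adj]
  exact ⟨hxy, by simpa using hne⟩

/-- Core argument: in an acyclic graph, two "oriented" distinct edges get distinct colors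
under any rainbow connected coloring. -/
private lemma core {G : SimpleGraph V} (hT : G.IsAcyclic)
    {a b x y : V} (hab : G.Adj a b) (hxy : G.Adj x y) (hne : s(a, b) ≠ s(x, y))
    (h1 : (G.deleteEdges {s(a, b)}).Reachable x b)
    (h2 : (G.deleteEdges {s(x, y)}).Reachable a x)
    {col : Sym2 V → ℕ} (hrc : RainbowConnected G col) :
    col s(a, b) ≠ col s(x, y) := by
  intro heq
  obtain ⟨p, hp, hnd⟩ := hrc a y
  have hbr1 := bridge_not_reach hT hab
  have hbr2 := bridge_not_reach hT hxy
  have he1 : s(a, b) ∈ p.edges := by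
    by_contra h
    have hr : (G.deleteEdges {s(a, b)}).Reachable a y := by
      refine ⟨p.toDeleteEdges {s(a, b)} ?_⟩
      intro e' he'
      simp only [Set.mem_singleton_iff]
      rintro rfl
      exact h he'
    have hyx : (G.deleteEdges {s(a, b)}).Adj x y := adj_delete_of_ne hxy (Ne.symm hne)
    exact hbr1 ((hr.trans hyx.symm.reachable).trans h1)
  have he2 : s(x, y) ∈ p.edges := by
    by_contra h
    have hr : (G.deleteEdges {s(x, y)}).Reachable a y := by
      refine ⟨p.toDeleteEdges {s(x, y)} ?_⟩
      intro e' he'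
      simp only [Set.mem_singleton_iff]
      rintro rfl
      exact h he'
    exact hbr2 (h2.symm.trans hr)
  exact hne (List.inj_on_of_nodup_map hnd he1 he2 heq)

/-- In a tree, any rainbow connected coloring is injective on the edge set. -/
private lemma tree_injOn {G : SimpleGraph V} (hT : G.IsTree)
    {col : Sym2 V → ℕ} (hrc : RainbowConnected G col) :
    ∀ e ∈ G.edgeSet, ∀ f ∈ G.edgeSet, col e = col f → e = f := by
  intro e he f hf heq
  by_contra hne
  induction e with
  | _ a b =>
  induction f with
  | _ x y =>
  rw [mem_edgeSet] at he hf
  have hac := hT.IsAcyclic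
  have hconn := hT.isConnected
  have hyx : s(y, x) = s(x, y) := Sym2.eq_swap
  have hba : s(b, a) = s(a, b) := Sym2.eq_swap
  rcases reach_side hac hconn he x with hxa | hxb
  · -- x on side of a : use (b, a) as orientation
    rcases reach_side hac hconn hf b with hbx | hby
    · exact core hac he.symm hf (by rw [hba]; exact hne) (by rwa [hba]) hbx hrc
        (by rw [hba]; exact heq)
    · refine core hac he.symm hf.symm (by rw [hba, hyx]; exact hne) ?_ (by rwa [hyx]) hrc ?_
      · rw [hba]
        exact ((adj_delete_of_ne hf.symm (by rw [hyx]; exact Ne.symm hne)).reachable).trans hxa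
      · rw [hba, hyx]; exact heq
  · rcases reach_side hac hconn hf a with hax | hay
    · exact core hac he hf hne hxb hax hrc heq
    · refine core hac he hf.symm (by rw [hyx]; exact hne) ?_ (by rwa [hyx]) hrc ?_
      · exact ((adj_delete_of_ne hf.symm (by rw [hyx]; exact Ne.symm hne)).reachable).trans hxb
      · rw [hyx]; exact heq

/-- If the two endpoints of a deleted edge are still reachable, then deleting the edge
preserves reachability. -/
private lemma reach_of_delete {G : SimpleGraph V} {a b : V}
    (hr : (G.deleteEdges {s(a, b)}).Reachable a b) {x y : V} (h : G.Reachable x y) :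
    (G.deleteEdges {s(a, b)}).Reachable x y := by
  obtain ⟨p⟩ := h
  induction p with
  | nil => exact Reachable.refl _
  | cons hadj q ih =>
    refine Reachable.trans ?_ ih
    rename_i u w _
    by_cases hcase : s(u, w) = s(a, b)
    · rw [Sym2.eq_iff] at hcase
      rcases hcase with ⟨rfl, rfl⟩ | ⟨rfl, rfl⟩
      · exact hr
      · exact hr.symm
    · exact (adj_delete_of_ne hadj hcase).reachable

end Aux

/-- rc(G) = m iff G is a tree. -/
theorem rc_eq_edgeCard_iff_isTree {V : Type*} [Fintype V] [DecidableEq V]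
    (G : SimpleGraph V) [DecidableRel G.Adj] (hG : G.Connected) (hV : 2 ≤ Fintype.card V) :
    rc G = G.edgeFinset.card ↔ G.IsTree := by
  classical
  set m := G.edgeFinset.card with hm
  set S := {n | ∃ c : Sym2 V → ℕ, (∀ e ∈ G.edgeSet, c e < n) ∧ RainbowConnected G c} with hS
  -- m is always achievable
  have hmS : m ∈ S := by
    refine ⟨fun e => G.edgeFinset.toList.idxOf e, ?_, ?_⟩
    · intro e he
      have hmem : e ∈ G.edgeFinset.toList := by
        rw [Finset.mem_toList, mem_edgeFinset]; exact he
      have := List.idxOf_lt_length_iff.2 hmem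
      rwa [Finset.length_toList] at this
    · refine rainbow_of_injOn hG ?_
      intro e he f hf h
      have hme : e ∈ G.edgeFinset.toList := by rw [Finset.mem_toList, mem_edgeFinset]; exact he
      have hmf : f ∈ G.edgeFinset.toList := by rw [Finset.mem_toList, mem_edgeFinset]; exact hf
      exact (List.idxOf_inj hme).1 h
  constructor
  · -- rc = m → tree
    intro hrc
    by_contra hnt
    have hnacyclic : ¬ G.IsAcyclic := fun hac => hnt ⟨hG, hac⟩
    rw [SimpleGraph.isAcyclic_iff_forall_adj_isBridge] at hnacyclic
    push_neg at hnacyclic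
    obtain ⟨a, b, hab, hnb⟩ := hnacyclic
    rw [isBridge_iff] at hnb
    push_neg at hnb
    have hreach : (G.deleteEdges {s(a, b)}).Reachable a b := hnb
    -- the deleted graph is connected
    have hconn' : (G.deleteEdges {s(a, b)}).Connected := by
      rw [connected_iff]
      exact ⟨fun x y => reach_of_delete hreach (hG.preconnected x y), hG.nonempty⟩
    -- m ≥ 2 since s(a,b) and an edge on the alternate path exist; simpler: m ≥ 2 because
    -- the deleted graph is connected on ≥ 2 vertices, so it has an edge besides s(a,b).
    have hab_mem : s(a, b) ∈ G.edgeFinset := by rw [mem_edgeFinset]; exact hab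
    -- there exists an edge of G other than s(a,b): take the first edge of a walk from a to b
    -- in the deleted graph.
    obtain ⟨w⟩ := hreach
    have hwne : ¬ w.Nil := by
      intro hnil
      exact hab.ne (SimpleGraph.Walk.Nil.eq hnil)
    obtain ⟨e0, he0⟩ : ∃ e0, e0 ∈ w.edges := by
      cases w with
      | nil => exact absurd SimpleGraph.Walk.nil_nil hwne
      | cons h q => exact ⟨_, List.mem_cons_self⟩
    have he0G : e0 ∈ (G.deleteEdges {s(a, b)}).edgeSet := Walk.edges_subset_edgeSet w he0
    rw [edgeSet_deleteEdges] at he0G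
    have he0ne : e0 ≠ s(a, b) := by
      intro h; exact he0G.2 (by rw [h]; rfl)
    have he0mem : e0 ∈ G.edgeFinset := by rw [mem_edgeFinset]; exact he0G.1
    have hm2 : 2 ≤ m := by
      have : ({e0, s(a, b)} : Finset (Sym2 V)) ⊆ G.edgeFinset := by
        intro z hz
        rcases Finset.mem_insert.1 hz with rfl | hz
        · exact he0mem
        · rw [Finset.mem_singleton.1 hz]; exact hab_mem
      calc 2 = ({e0, s(a, b)} : Finset (Sym2 V)).card := by
                rw [Finset.card_insert_of_notMem (by simpa using he0ne), Finset.card_singleton]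
           _ ≤ m := Finset.card_le_card this
    -- now color: edges other than s(a,b) injectively with m-1 colors, s(a,b) gets color 0
    have hcolor : m - 1 ∈ S := by
      set L := (G.edgeFinset.erase s(a, b)).toList with hL
      refine ⟨fun e => if e = s(a, b) then 0 else L.idxOf e, ?_, ?_⟩
      · intro e he
        by_cases hcase : e = s(a, b)
        · have h0 : (fun e => if e = s(a, b) then 0 else L.idxOf e) e = 0 := by
            simp [hcase]
          rw [h0]
          omega
        · simp only [if_neg hcase]
          have hmem : e ∈ L := by
            rw [hL, Finset.mem_toList, Finset.mem_erase]
            exact ⟨hcase, by rw [mem_edgeFinset]; exact he⟩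
          have := List.idxOf_lt_length_iff.2 hmem
          rwa [Finset.length_toList, Finset.card_erase_of_mem hab_mem] at this
      · intro u v
        obtain ⟨q⟩ := hconn'.preconnected u v
        set q' := (q.toPath : (G.deleteEdges {s(a, b)}).Walk u v) with hq'
        have hq'path : q'.IsPath := q.toPath.2
        have hsub : ∀ e ∈ q'.edges, e ∈ G.edgeSet := by
          intro e he
          have := Walk.edges_subset_edgeSet q' he
          rw [edgeSet_deleteEdges] at this
          exact this.1
        have hne' : ∀ e ∈ q'.edges, e ≠ s(a, b) := by
          intro e he h
          have := Walk.edges_subset_edgeSet q' he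
          rw [edgeSet_deleteEdges] at this
          exact this.2 (by rw [h]; rfl)
        refine ⟨q'.transfer G hsub, hq'path.transfer hsub, ?_⟩
        rw [Walk.edges_transfer]
        refine List.Nodup.map_on ?_ hq'path.isTrail.edges_nodup
        intro e he f hf h
        simp only [if_neg (hne' e he), if_neg (hne' f hf)] at h
        have hmeme : e ∈ L := by
          rw [hL, Finset.mem_toList, Finset.mem_erase, mem_edgeFinset]
          exact ⟨hne' e he, hsub e he⟩
        have hmemf : f ∈ L := by
          rw [hL, Finset.mem_toList, Finset.mem_erase, mem_edgeFinset]
          exact ⟨hne' f hf, hsub f hf⟩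
        exact (List.idxOf_inj hmeme).1 h
    have : rc G ≤ m - 1 := Nat.sInf_le hcolor
    rw [hrc] at this
    omega
  · -- tree → rc = m
    intro hT
    refine le_antisymm (Nat.sInf_le hmS) ?_
    refine le_csInf ⟨m, hmS⟩ ?_
    rintro n ⟨c, hlt, hrc⟩
    have hinj := tree_injOn hT hrc
    have : (G.edgeFinset.image c).card = m := by
      rw [Finset.card_image_of_injOn]
      intro e he f hf h
      exact hinj e (by rwa [← mem_edgeFinset]) f (by rwa [← mem_edgeFinset]) h
    have hsub : G.edgeFinset.image c ⊆ Finset.range n := by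
      intro k hk
      obtain ⟨e, he, rfl⟩ := Finset.mem_image.1 hk
      rw [Finset.mem_range]
      exact hlt e (by rwa [← mem_edgeFinset])
    calc m = (G.edgeFinset.image c).card := this.symm
      _ ≤ (Finset.range n).card := Finset.card_le_card hsub
      _ = n := Finset.card_range n
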